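/- The map ι₂(u,v) = (b v²(v+1)/(a u (b v + 1)), v) preserves the rational invariant F/G, where F(u,v) = v²(1+u+v) + au(u/b + uv + v²) and G(u,v) = uv; i.e., F(ι₂(u,v))·G(u,v) = F(u,v)·G(ι₂(u,v)) wherever defined. -/

import Mathlib

noncomputable def Fcub {K : Type*} [Field K] (a b u v : K) : K :=
  v^2 * (1 + u + v) + a*u*(u/b + u*v + v^2)

def Gcub {K : Type*} [Field K] (u v : K) : K := u * v

noncomputable def iota2 {K : Type*} [Field K] (a b : K) (p : K × K) : K × K :=
  (b * p.2^2 * (p.2 + 1) / (a * p.1 * (b * p.2 + 1)), p.2)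

/-- ι₂ preserves the invariant F/G. -/
theorem iota2_preserves_invariant {K : Type*} [Field K] (a b u v : K)
    (ha : a ≠ 0) (hb : b ≠ 0) (hu : u ≠ 0) (hbv : b * v + 1 ≠ 0) :
    Fcub a b (iota2 a b (u, v)).1 (iota2 a b (u, v)).2 * Gcub u v =
      Fcub a b u v * Gcub (iota2 a b (u, v)).1 (iota2 a b (u, v)).2 := by
  have hd : a * u * (b * v + 1) ≠ 0 := mul_ne_zero (mul_ne_zero ha hu) hbv
  simp only [Fcub, Gcub, iota2]
  generalize hD : a * u * (b * v + 1) = d at hd ⊢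
  field_simp
  subst hD
  ring
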